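/- Let (E, ℰ, ν) be a measure space, γ₁ > 0, γ₂ > 0, let H be a real inner product space, z ∈ H, and let u : E → ℝ be measurable with ∫ h(u(x)/γ₁) dν(x) < ∞. Consider all pairs (v, w) with v ∈ H and w : E → ℝ measurable such that both x ↦ h(w(x)/γ₁) and x ↦ h((u(x)−w(x))/γ₂) are ν-integrable. Then the infimum over all such pairs of ‖v‖²/(2γ₁) + γ₁∫ h(w(x)/γ₁) dν(x) + ‖z−v‖²/(2γ₂) + γ₂∫ h((u(x)−w(x))/γ₂) dν(x) equals ‖z‖²/(2(γ₁+γ₂)) + (γ₁+γ₂)∫ h(u(x)/(γ₁+γ₂)) dν(x), and it is attained at v = (γ₁/(γ₁+γ₂))·z and w = (γ₁/(γ₁+γ₂))·u. -/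

import Mathlib

open MeasureTheory

private lemma h_nonneg (t : ℝ) : 0 ≤ Real.exp t - 1 - t := by
  have := Real.add_one_le_exp t; linarith

private lemma h_convex (a b l m : ℝ) (hl : 0 ≤ l) (hm : 0 ≤ m) (hs : l + m = 1) :
    Real.exp (l * a + m * b) - 1 - (l * a + m * b)
      ≤ l * (Real.exp a - 1 - a) + m * (Real.exp b - 1 - b) := by
  have h := convexOn_exp.2 (Set.mem_univ a) (Set.mem_univ b) hl hm hs
  simp only [smul_eq_mul] at h
  nlinarith

/-- Inf-convolution of two entropic generators `g^γ(z,u) = ‖z‖²/(2γ) + γ∫h(u/γ)dν`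
(with `h t = exp t - 1 - t`): the infimum over admissible splittings `(v,w)` of
`g^{γ₁}(v,w) + g^{γ₂}(z-v, u-w)` equals `g^{γ₁+γ₂}(z,u)`, attained at the proportional
splitting `v = γ₁z/(γ₁+γ₂)`, `w = γ₁u/(γ₁+γ₂)`. -/
theorem entropic_generator_infconv
    {E : Type*} [MeasurableSpace E] (ν : Measure E)
    (γ₁ γ₂ : ℝ) (hγ₁ : 0 < γ₁) (hγ₂ : 0 < γ₂)
    {H : Type*} [NormedAddCommGroup H] [InnerProductSpace ℝ H] (z : H)
    (u : E → ℝ) (hu : Measurable u)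
    (hint : Integrable (fun x => Real.exp (u x / γ₁) - 1 - u x / γ₁) ν) :
    IsLeast
        {r : ℝ | ∃ (v : H) (w : E → ℝ), Measurable w ∧
          Integrable (fun x => Real.exp (w x / γ₁) - 1 - w x / γ₁) ν ∧
          Integrable (fun x => Real.exp ((u x - w x) / γ₂) - 1 - (u x - w x) / γ₂) ν ∧
          r = ‖v‖ ^ 2 / (2 * γ₁)
              + γ₁ * ∫ x, (Real.exp (w x / γ₁) - 1 - w x / γ₁) ∂ν
              + ‖z - v‖ ^ 2 / (2 * γ₂)
              + γ₂ * ∫ x, (Real.exp ((u x - w x) / γ₂) - 1 - (u x - w x) / γ₂) ∂ν}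
        (‖z‖ ^ 2 / (2 * (γ₁ + γ₂))
          + (γ₁ + γ₂) * ∫ x, (Real.exp (u x / (γ₁ + γ₂)) - 1 - u x / (γ₁ + γ₂)) ∂ν) ∧
      (Integrable
          (fun x => Real.exp ((γ₁ / (γ₁ + γ₂)) * u x / γ₁) - 1
            - (γ₁ / (γ₁ + γ₂)) * u x / γ₁) ν ∧
        Integrable
          (fun x => Real.exp ((u x - (γ₁ / (γ₁ + γ₂)) * u x) / γ₂) - 1
            - (u x - (γ₁ / (γ₁ + γ₂)) * u x) / γ₂) ν ∧
        ‖(γ₁ / (γ₁ + γ₂)) • z‖ ^ 2 / (2 * γ₁)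
            + γ₁ * ∫ x, (Real.exp ((γ₁ / (γ₁ + γ₂)) * u x / γ₁) - 1
                - (γ₁ / (γ₁ + γ₂)) * u x / γ₁) ∂ν
            + ‖z - (γ₁ / (γ₁ + γ₂)) • z‖ ^ 2 / (2 * γ₂)
            + γ₂ * ∫ x, (Real.exp ((u x - (γ₁ / (γ₁ + γ₂)) * u x) / γ₂) - 1
                - (u x - (γ₁ / (γ₁ + γ₂)) * u x) / γ₂) ∂ν =
          ‖z‖ ^ 2 / (2 * (γ₁ + γ₂))
            + (γ₁ + γ₂) * ∫ x, (Real.exp (u x / (γ₁ + γ₂)) - 1 - u x / (γ₁ + γ₂)) ∂ν) := by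
  set γ := γ₁ + γ₂ with hγdef
  have hγ : 0 < γ := by positivity
  have hγne : γ ≠ 0 := hγ.ne'
  -- integrability of h(u/γ)
  have hmeasu : Measurable fun x => Real.exp (u x / γ) - 1 - u x / γ :=
    ((Real.measurable_exp.comp (hu.div_const γ)).sub measurable_const).sub (hu.div_const γ)
  have hptw : ∀ x, Real.exp (u x / γ) - 1 - u x / γ
      ≤ (γ₁ / γ) * (Real.exp (u x / γ₁) - 1 - u x / γ₁) := by
    intro x
    have h := h_convex (u x / γ₁) 0 (γ₁ / γ) (γ₂ / γ) (by positivity) (by positivity)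
      (by field_simp; exact hγdef.symm)
    have e : (γ₁ / γ) * (u x / γ₁) + (γ₂ / γ) * 0 = u x / γ := by field_simp; ring
    rw [e] at h
    simpa using h
  have hintu : Integrable (fun x => Real.exp (u x / γ) - 1 - u x / γ) ν := by
    refine Integrable.mono' (hint.const_mul (γ₁ / γ)) hmeasu.aestronglyMeasurable ?_
    filter_upwards with x
    rw [Real.norm_of_nonneg (h_nonneg _)]
    exact hptw x
  -- the two witness integrands equal h(u/γ)
  have e1 : (fun x => Real.exp ((γ₁ / γ) * u x / γ₁) - 1 - (γ₁ / γ) * u x / γ₁)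
      = fun x => Real.exp (u x / γ) - 1 - u x / γ := by
    funext x
    have : (γ₁ / γ) * u x / γ₁ = u x / γ := by field_simp
    rw [this]
  have e2 : (fun x => Real.exp ((u x - (γ₁ / γ) * u x) / γ₂) - 1 - (u x - (γ₁ / γ) * u x) / γ₂)
      = fun x => Real.exp (u x / γ) - 1 - u x / γ := by
    funext x
    have : (u x - (γ₁ / γ) * u x) / γ₂ = u x / γ := by field_simp; ring
    rw [this]
  have hzsub : z - (γ₁ / γ) • z = (γ₂ / γ) • z := by
    rw [show (γ₂ / γ) • z = ((1 : ℝ) - γ₁ / γ) • z by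
        congr 1; rw [hγdef]; field_simp; ring,
      sub_smul, one_smul]
  have hn1 : ‖(γ₁ / γ) • z‖ = (γ₁ / γ) * ‖z‖ := by
    rw [norm_smul, Real.norm_of_nonneg (by positivity)]
  have hn2 : ‖z - (γ₁ / γ) • z‖ = (γ₂ / γ) * ‖z‖ := by
    rw [hzsub, norm_smul, Real.norm_of_nonneg (by positivity)]
  have attain : ‖(γ₁ / γ) • z‖ ^ 2 / (2 * γ₁)
        + γ₁ * ∫ x, (Real.exp ((γ₁ / γ) * u x / γ₁) - 1 - (γ₁ / γ) * u x / γ₁) ∂ν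
        + ‖z - (γ₁ / γ) • z‖ ^ 2 / (2 * γ₂)
        + γ₂ * ∫ x, (Real.exp ((u x - (γ₁ / γ) * u x) / γ₂) - 1 - (u x - (γ₁ / γ) * u x) / γ₂) ∂ν
      = ‖z‖ ^ 2 / (2 * γ) + γ * ∫ x, (Real.exp (u x / γ) - 1 - u x / γ) ∂ν := by
    rw [e1, e2, hn1, hn2]
    field_simp
    ring
  refine ⟨⟨⟨(γ₁ / γ) • z, fun x => (γ₁ / γ) * u x, (hu.const_mul _), ?_, ?_, attain.symm⟩, ?_⟩,
    e1 ▸ hintu, e2 ▸ hintu, attain⟩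
  · rw [e1]; exact hintu
  · rw [e2]; exact hintu
  · -- lower bound
    rintro r ⟨v, w, hw, hw1, hw2, rfl⟩
    have hnz : ‖z‖ ≤ ‖v‖ + ‖z - v‖ := by
      calc ‖z‖ = ‖v + (z - v)‖ := by rw [add_sub_cancel]
        _ ≤ ‖v‖ + ‖z - v‖ := norm_add_le _ _
    have hnorm : ‖z‖ ^ 2 / (2 * γ) ≤ ‖v‖ ^ 2 / (2 * γ₁) + ‖z - v‖ ^ 2 / (2 * γ₂) := by
      rw [div_add_div _ _ (by positivity) (by positivity),
        div_le_div_iff₀ (by positivity) (by positivity)]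
      have hz2 : ‖z‖ ^ 2 ≤ (‖v‖ + ‖z - v‖) ^ 2 := by
        nlinarith [norm_nonneg z, norm_nonneg v, norm_nonneg (z - v)]
      rw [hγdef]
      nlinarith [sq_nonneg (γ₂ * ‖v‖ - γ₁ * ‖z - v‖), mul_pos hγ₁ hγ₂, hz2]
    have hpt : ∀ x, Real.exp (u x / γ) - 1 - u x / γ
        ≤ (γ₁ / γ) * (Real.exp (w x / γ₁) - 1 - w x / γ₁)
          + (γ₂ / γ) * (Real.exp ((u x - w x) / γ₂) - 1 - (u x - w x) / γ₂) := by
      intro x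
      have h := h_convex (w x / γ₁) ((u x - w x) / γ₂) (γ₁ / γ) (γ₂ / γ)
        (by positivity) (by positivity) (by field_simp; exact hγdef.symm)
      have e : (γ₁ / γ) * (w x / γ₁) + (γ₂ / γ) * ((u x - w x) / γ₂) = u x / γ := by
        field_simp; ring
      rwa [e] at h
    have hintsum : Integrable (fun x => (γ₁ / γ) * (Real.exp (w x / γ₁) - 1 - w x / γ₁)
        + (γ₂ / γ) * (Real.exp ((u x - w x) / γ₂) - 1 - (u x - w x) / γ₂)) ν :=
      (hw1.const_mul _).add (hw2.const_mul _)
    have hIle : ∫ x, (Real.exp (u x / γ) - 1 - u x / γ) ∂ν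
        ≤ (γ₁ / γ) * ∫ x, (Real.exp (w x / γ₁) - 1 - w x / γ₁) ∂ν
          + (γ₂ / γ) * ∫ x, (Real.exp ((u x - w x) / γ₂) - 1 - (u x - w x) / γ₂) ∂ν := by
      calc ∫ x, (Real.exp (u x / γ) - 1 - u x / γ) ∂ν
          ≤ ∫ x, ((γ₁ / γ) * (Real.exp (w x / γ₁) - 1 - w x / γ₁)
              + (γ₂ / γ) * (Real.exp ((u x - w x) / γ₂) - 1 - (u x - w x) / γ₂)) ∂ν :=
            integral_mono hintu hintsum hpt
        _ = _ := by
            rw [integral_add (hw1.const_mul _) (hw2.const_mul _),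
              integral_const_mul, integral_const_mul]
    have hIle' : γ * ∫ x, (Real.exp (u x / γ) - 1 - u x / γ) ∂ν
        ≤ γ₁ * ∫ x, (Real.exp (w x / γ₁) - 1 - w x / γ₁) ∂ν
          + γ₂ * ∫ x, (Real.exp ((u x - w x) / γ₂) - 1 - (u x - w x) / γ₂) ∂ν := by
      have := mul_le_mul_of_nonneg_left hIle hγ.le
      calc γ * ∫ x, (Real.exp (u x / γ) - 1 - u x / γ) ∂ν
          ≤ γ * ((γ₁ / γ) * ∫ x, (Real.exp (w x / γ₁) - 1 - w x / γ₁) ∂ν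
            + (γ₂ / γ) * ∫ x, (Real.exp ((u x - w x) / γ₂) - 1 - (u x - w x) / γ₂) ∂ν) := this
        _ = _ := by field_simp; try ring
    linarith
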